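/- Let r ≡ 1 (mod 4) be a prime power, γ a primitive element of GF(r²), U the subgroup of (r+1)-st roots of unity, and ξ = γ^{(r+1)/2}. Then every x ∈ GF(r²)* can be written as x = y z ε with y ∈ GF(r)*, z ∈ U, ε ∈ {1, ξ}, and each x ∈ GF(r²)* has exactly two such representations. -/

import Mathlib

/-- Let `r ≡ 1 (mod 4)` be a prime power, `γ` a primitive element of `GF(r²)`,
`ξ = γ^{(r+1)/2}`. Every `x ∈ GF(r²)*` has exactly two representations
`x = y·z·ε` with `y ∈ GF(r)*`, `z^{r+1} = 1` and `ε ∈ {1, ξ}`. -/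
theorem stmt5 (p l r : ℕ) (hp : p.Prime) (hl : 1 ≤ l) (hr : r = p ^ l)
    (hr4 : r % 4 = 1)
    (K L : Type) [Field K] [Field L] [Fintype K] [Fintype L] [Algebra K L]
    (hK : Fintype.card K = r) (hL : Fintype.card L = r ^ 2)
    (γ : Lˣ) (hγ : orderOf γ = r ^ 2 - 1)
    (ξ : Lˣ) (hξ : ξ = γ ^ ((r + 1) / 2)) :
    ∀ x : Lˣ,
      Nat.card {t : Kˣ × Lˣ × Lˣ // t.2.1 ^ (r + 1) = 1 ∧ (t.2.2 = 1 ∨ t.2.2 = ξ) ∧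
        Units.map (algebraMap K L).toMonoidHom t.1 * t.2.1 * t.2.2 = x} = 2 := by
  intro x
  classical
  set f : Kˣ →* Lˣ := Units.map (algebraMap K L).toMonoidHom with hfdef
  have hfinj : Function.Injective f :=
    Units.map_injective (algebraMap K L).injective
  -- basic numerics
  have hr2 : 2 ≤ r := by
    rw [hr]; exact Nat.one_lt_pow (by omega) hp.one_lt
  have hr5 : 5 ≤ r := by omega
  set s : ℕ := (r + 1) / 2 with hs
  have hs2 : 2 * s = r + 1 := by omega
  have hsodd : s % 2 = 1 := by omega
  set n : ℕ := r ^ 2 - 1 with hn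
  have hn' : n = (r - 1) * (r + 1) := by
    have h : (r - 1) * (r + 1) + 1 = r ^ 2 := by
      obtain ⟨m, rfl⟩ : ∃ m, r = m + 1 := ⟨r - 1, by omega⟩
      simp [pow_two]; ring
    omega
  set h0 : ℕ := (r - 1) * s with hh0
  have hh : 2 * h0 = n := by
    rw [hh0, hn']
    calc 2 * ((r - 1) * s) = (r - 1) * (2 * s) := by ring
    _ = (r - 1) * (r + 1) := by rw [hs2]
  have hh0pos : 0 < h0 := by
    rw [hh0]; exact Nat.mul_pos (by omega) (by omega)
  have hcardL : Fintype.card Lˣ = n := by rw [Fintype.card_units, hL]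
  have hγn : γ ^ n = 1 := by rw [← hγ]; exact pow_orderOf_eq_one γ
  have hγnz : γ ^ (n : ℤ) = 1 := by rw [zpow_natCast]; exact hγn
  -- γ generates Lˣ
  have htop : ∀ w : Lˣ, w ∈ Subgroup.zpowers γ := by
    have h : Subgroup.zpowers γ = ⊤ := by
      apply Subgroup.eq_top_of_card_eq
      rw [Nat.card_zpowers, hγ, Nat.card_eq_fintype_card, hcardL]
    intro w; rw [h]; trivial
  -- every (r-1)-st root of unity in Lˣ comes from Kˣ
  have hcardK : Fintype.card Kˣ = r - 1 := by rw [Fintype.card_units, hK]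
  have hfpow : ∀ y : Kˣ, f y ^ (r - 1) = 1 := fun y => by
    rw [← map_pow, ← hcardK, pow_card_eq_one, map_one]
  have hA : ∀ w : Lˣ, w ^ (r - 1) = 1 → ∃ y : Kˣ, f y = w := by
    intro w hw
    have h1 : (Finset.univ.image f) ⊆
        Finset.univ.filter (fun g : Lˣ => g ^ (r - 1) = 1) := by
      intro g hg
      obtain ⟨y, -, rfl⟩ := Finset.mem_image.mp hg
      simp [hfpow y]
    have h2 : (Finset.univ.filter (fun g : Lˣ => g ^ (r - 1) = 1)).card ≤ r - 1 := by
      calc (Finset.univ.filter (fun g : Lˣ => g ^ (r - 1) = 1)).card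
          ≤ Multiset.card (Polynomial.nthRoots (r - 1) ((Units.coeHom L) (1 : Lˣ))) :=
            card_nthRoots_subgroup_units (Units.coeHom L) (fun _ _ h => Units.ext h) (by omega) 1
        _ ≤ r - 1 := Polynomial.card_nthRoots (r - 1) _
    have h3 : (Finset.univ.image f).card = r - 1 := by
      rw [Finset.card_image_of_injective _ hfinj, Finset.card_univ, hcardK]
    have heq := Finset.eq_of_subset_of_card_le h1 (by rw [h3]; exact h2)
    have hw' : w ∈ Finset.univ.image f := by
      rw [heq]; simp [hw]
    obtain ⟨y, -, hy⟩ := Finset.mem_image.mp hw'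
    exact ⟨y, hy⟩
  -- squares-roots of 1
  have hsq : ∀ c : Lˣ, c * c = 1 → c = 1 ∨ c = -1 := by
    intro c hc
    have h : (c : L) * (c : L) = 1 := by
      have := congrArg (Units.val) hc
      simpa using this
    rcases mul_self_eq_one_iff.mp h with h | h
    · left; exact Units.ext h
    · right; exact Units.ext (by rw [h, Units.val_neg, Units.val_one])
  have hmid : γ ^ h0 ≠ 1 := by
    intro hcon
    have hd : n ∣ h0 := by rw [← hγ]; exact orderOf_dvd_iff_pow_eq_one.mpr hcon
    have := Nat.le_of_dvd hh0pos hd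
    omega
  have hneg : (-1 : Lˣ) ≠ 1 := by
    have h1 : γ ^ h0 * γ ^ h0 = 1 := by
      rw [← pow_add, show h0 + h0 = n by omega]; exact hγn
    rcases hsq _ h1 with h | h
    · exact absurd h hmid
    · intro hcon; rw [hcon] at h; exact hmid h
  -- ξ ^ h0 ≠ 1
  have hξh : ξ ^ h0 ≠ 1 := by
    obtain ⟨q, hq⟩ : ∃ q, s = 2 * q + 1 := ⟨s / 2, by omega⟩
    have hmul : s * h0 = q * n + h0 := by
      rw [hq, ← hh]; ring
    have hξγ : ξ ^ h0 = γ ^ h0 := by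
      rw [hξ, ← pow_mul, hmul, pow_add, pow_mul', hγn, one_pow, one_mul]
    rw [hξγ]; exact hmid
  -- (f y * z) ^ h0 = 1 whenever z ^ (r+1) = 1
  have hprod : ∀ (y : Kˣ) (z : Lˣ), z ^ (r + 1) = 1 → (f y * z) ^ h0 = 1 := by
    intro y z hz
    have h1 : f y ^ h0 = 1 := by rw [hh0, pow_mul, hfpow, one_pow]
    have h2 : z ^ h0 = 1 := by
      obtain ⟨q, hq⟩ : ∃ q, r - 1 = 2 * q := ⟨(r - 1) / 2, by omega⟩
      have : h0 = (r + 1) * q := by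
        rw [hh0, hq]
        calc 2 * q * s = q * (2 * s) := by ring
        _ = (r + 1) * q := by rw [hs2]; ring
      rw [this, pow_mul, hz, one_pow]
    rw [mul_pow, h1, h2, one_mul]
  -- ε is determined
  have hεuniq : ∀ (y y' : Kˣ) (z z' : Lˣ), z ^ (r + 1) = 1 → z' ^ (r + 1) = 1 →
      f y * z = f y' * z' * ξ → False := by
    intro y y' z z' hz hz' heq
    have h1 := hprod y z hz
    have h2 := hprod y' z' hz'
    have h3 : (f y' * z' * ξ) ^ h0 = ξ ^ h0 := by rw [mul_pow, h2, one_mul]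
    rw [← heq, h1] at h3
    exact hξh h3.symm
  -- negation facts
  have hfneg : ∀ y : Kˣ, f (-y) = -f y := by
    intro y
    apply Units.ext
    rw [Units.val_neg]
    show ((algebraMap K L) ((-y : Kˣ) : K)) = -((algebraMap K L) (y : K))
    rw [Units.val_neg, map_neg]
  have hnegpow : ∀ z : Lˣ, z ^ (r + 1) = 1 → (-z) ^ (r + 1) = 1 := by
    intro z hz
    have h : (-z) = (-1) * z := by simp
    rw [h, mul_pow, hz, mul_one, ← hs2, pow_mul, neg_one_sq, one_pow]
  -- existence
  obtain ⟨m, hm⟩ := Subgroup.mem_zpowers_iff.mp (htop x)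
  set a : ℤ := ((r + 1 : ℕ) : ℤ) with ha
  set b : ℤ := ((r - 1 : ℕ) : ℤ) with hb
  have hab : a - b = 2 := by rw [ha, hb]; omega
  have hba : b * a = (n : ℤ) := by rw [ha, hb, hn']; push_cast; ring
  set e : ℤ := m % 2 with he
  have he01 : e = 0 ∨ e = 1 := by omega
  obtain ⟨k, hk⟩ : ∃ k : ℤ, 2 * k = m - e * (s : ℤ) := by
    rcases he01 with h2 | h2
    · exact ⟨m / 2, by rw [h2]; simp; omega⟩
    · refine ⟨(m - (s : ℤ)) / 2, ?_⟩
      rw [h2, one_mul]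
      omega
  set w : Lˣ := γ ^ (k * a) with hw
  set z₀ : Lˣ := γ ^ (-(k * b)) with hz₀def
  set ε₀ : Lˣ := if e = 1 then ξ else 1 with hε₀def
  have hwpow : w ^ (r - 1) = 1 := by
    rw [hw, ← zpow_natCast (γ ^ (k * a)) (r - 1), ← zpow_mul, ← hb]
    have h : k * a * b = (n : ℤ) * k := by rw [← hba]; ring
    rw [h, zpow_mul, hγnz, one_zpow]
  have hz₀pow : z₀ ^ (r + 1) = 1 := by
    rw [hz₀def, ← zpow_natCast (γ ^ (-(k * b))) (r + 1), ← zpow_mul, ← ha]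
    have h : -(k * b) * a = (n : ℤ) * (-k) := by rw [← hba]; ring
    rw [h, zpow_mul, hγnz, one_zpow]
  have hε₀mem : ε₀ = 1 ∨ ε₀ = ξ := by
    rcases he01 with h2 | h2 <;> simp [hε₀def, h2]
  have hε₀γ : ε₀ = γ ^ (e * (s : ℤ)) := by
    rcases he01 with h2 | h2
    · simp [hε₀def, h2]
    · rw [hε₀def, if_pos h2, h2, one_mul, zpow_natCast, hξ, hs]
  obtain ⟨y, hy⟩ := hA w hwpow
  have hxeq : f y * z₀ * ε₀ = x := by
    rw [hy, hw, hz₀def, hε₀γ, ← zpow_add, ← zpow_add]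
    have hexp : k * a + -(k * b) + e * (s : ℤ) = m := by
      have h1 : k * a + -(k * b) = k * (a - b) := by ring
      have h2 : k * (a - b) = 2 * k := by rw [hab]; ring
      linarith [hk]
    rw [hexp, hm]
  have hxeq' : f (-y) * (-z₀) * ε₀ = x := by
    rw [hfneg, neg_mul_neg, hxeq]
  -- count
  rw [Nat.card_eq_two_iff]
  refine ⟨⟨(y, z₀, ε₀), hz₀pow, hε₀mem, hxeq⟩,
    ⟨(-y, -z₀, ε₀), hnegpow z₀ hz₀pow, hε₀mem, hxeq'⟩, ?_, ?_⟩
  · intro hcon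
    have hyy : y = -y := congrArg (fun t => t.val.1) hcon
    have h1 : f y = -f y := by conv_lhs => rw [hyy, hfneg]
    have h2 : (-1 : Lˣ) * f y = 1 * f y := by
      rw [one_mul, neg_one_mul, ← h1]
    exact hneg (mul_right_cancel h2)
  · ext t'
    simp only [Set.mem_insert_iff, Set.mem_singleton_iff, Set.mem_univ, iff_true]
    obtain ⟨⟨y', z', ε'⟩, hz', hε', hx'⟩ := t'
    dsimp only at hz' hε' hx'
    simp only [Subtype.mk.injEq, Prod.mk.injEq]
    -- first : ε' = ε₀
    have hεε : ε' = ε₀ := by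
      rcases hε' with h1 | h1 <;> rcases hε₀mem with h2 | h2
      · rw [h1, h2]
      · exfalso
        apply hεuniq y' y z' z₀ hz' hz₀pow
        rw [← h2, hxeq, ← hx', h1, mul_one]
      · exfalso
        apply hεuniq y y' z₀ z' hz₀pow hz'
        rw [← h1, hx', ← hxeq, h2, mul_one]
      · rw [h1, h2]
    have hcanc : f y' * z' = f y * z₀ := by
      have h := hx'.trans hxeq.symm
      rw [hεε] at h
      exact mul_right_cancel h
    set c : Lˣ := z' * z₀⁻¹ with hc
    have hcf : c = f (y'⁻¹ * y) := by
      rw [map_mul, map_inv, hc]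
      have hthis : z' = (f y')⁻¹ * (f y * z₀) := by
        have h := congrArg (fun t => (f y')⁻¹ * t) hcanc
        simpa [← mul_assoc] using h
      rw [hthis]
      group
    have hc1 : c ^ (r - 1) = 1 := by rw [hcf]; exact hfpow _
    have hc2 : c ^ (r + 1) = 1 := by
      rw [hc, mul_pow, hz', inv_pow, hz₀pow, inv_one, one_mul]
    have hcc : c * c = 1 := by
      have h : c ^ (r + 1) = c ^ (r - 1) * (c * c) := by
        rw [← pow_two, ← pow_add, show r - 1 + 2 = r + 1 by omega]
      rw [hc2, hc1, one_mul] at h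
      exact h.symm
    rcases hsq c hcc with h | h
    · left
      have hzz : z' = z₀ := by
        have : z' * z₀⁻¹ * z₀ = 1 * z₀ := by rw [← hc, h]
        simpa using this
      have hyy : y' = y := by
        apply hfinj
        have := hcanc
        rw [hzz] at this
        exact mul_right_cancel this
      exact ⟨hyy, hzz, hεε⟩
    · right
      have hzz : z' = -z₀ := by
        have : z' * z₀⁻¹ * z₀ = (-1) * z₀ := by rw [← hc, h]
        simpa using this
      have hyy : y' = -y := by
        have hf1 : f (y'⁻¹ * y) = f (-1) := by
          rw [← hcf, h, hfneg, map_one]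
        have h2 : y'⁻¹ * y = -1 := hfinj hf1
        have h3 : y' * (y'⁻¹ * y) = y' * (-1) := by rw [h2]
        rw [← mul_assoc, mul_inv_cancel, one_mul, mul_neg_one] at h3
        rw [h3, neg_neg]
      exact ⟨hyy, hzz, hεε⟩
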